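/- The matrices G₁ = [[1,0,-i],[-1-i,1,-1+i],[-1-i,1-i,i]], G₂ = [[1,1-i,-1+i],[-1-i,-1,1-i],[-1+i,1+i,-1-2i]], G₃ = [[i,1+i,-i],[1-i,-1-2i,2i],[-1-i,-3+i,3+2i]], G₄ = [[-i,0,0],[-1+i,-1,0],[-1+i,-1+i,-i]] all lie in SU(2,1) with entries in the Gaussian integers ℤ[i]. -/
import Mathlib


open Complex Matrix

noncomputable section

def formJ : Matrix (Fin 3) (Fin 3) ℂ := !![0, 0, 1; 0, 1, 0; 1, 0, 0]

def InSU21 (M : Matrix (Fin 3) (Fin 3) ℂ) : Prop :=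
  M.conjTranspose * formJ * M = formJ ∧ M.det = 1

/-- The entries of `M` are Gaussian integers. -/
def GaussianEntries (M : Matrix (Fin 3) (Fin 3) ℂ) : Prop :=
  ∀ i j : Fin 3, ∃ a b : ℤ, M i j = (a : ℂ) + (b : ℂ) * Complex.I

def W₁ : Matrix (Fin 3) (Fin 3) ℂ :=
  !![1, 0, -Complex.I;
     -1 - Complex.I, 1, -1 + Complex.I;
     -1 - Complex.I, 1 - Complex.I, Complex.I]

def W₂ : Matrix (Fin 3) (Fin 3) ℂ :=
  !![1, 1 - Complex.I, -1 + Complex.I;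
     -1 - Complex.I, -1, 1 - Complex.I;
     -1 + Complex.I, 1 + Complex.I, -1 - 2 * Complex.I]

def W₃ : Matrix (Fin 3) (Fin 3) ℂ :=
  !![Complex.I, 1 + Complex.I, -Complex.I;
     1 - Complex.I, -1 - 2 * Complex.I, 2 * Complex.I;
     -1 - Complex.I, -3 + Complex.I, 3 + 2 * Complex.I]

def W₄ : Matrix (Fin 3) (Fin 3) ℂ :=
  !![-Complex.I, 0, 0;
     -1 + Complex.I, -1, 0;
     -1 + Complex.I, -1 + Complex.I, -Complex.I]

lemma inSU21_w1 : InSU21 W₁ := by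
  constructor
  · ext i j
    fin_cases i <;> fin_cases j <;>
      simp [W₁, formJ, Matrix.mul_apply, Fin.sum_univ_succ,
        Complex.ext_iff, Matrix.vecHead, Matrix.vecTail] <;> ring_nf <;> simp
  · simp [W₁, Matrix.det_fin_three, Complex.ext_iff,
      Matrix.vecHead, Matrix.vecTail] <;> ring_nf <;> simp

lemma gauss_w1 : GaussianEntries W₁ := by
  intro i j
  fin_cases i <;> fin_cases j
  · exact ⟨1, 0, by norm_num [W₁, Matrix.vecHead, Matrix.vecTail, Complex.ext_iff]⟩
  · exact ⟨0, 0, by norm_num [W₁, Matrix.vecHead, Matrix.vecTail, Complex.ext_iff]⟩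
  · exact ⟨0, -1, by norm_num [W₁, Matrix.vecHead, Matrix.vecTail, Complex.ext_iff]⟩
  · exact ⟨-1, -1, by norm_num [W₁, Matrix.vecHead, Matrix.vecTail, Complex.ext_iff]⟩
  · exact ⟨1, 0, by norm_num [W₁, Matrix.vecHead, Matrix.vecTail, Complex.ext_iff]⟩
  · exact ⟨-1, 1, by norm_num [W₁, Matrix.vecHead, Matrix.vecTail, Complex.ext_iff]⟩
  · exact ⟨-1, -1, by norm_num [W₁, Matrix.vecHead, Matrix.vecTail, Complex.ext_iff]⟩
  · exact ⟨1, -1, by norm_num [W₁, Matrix.vecHead, Matrix.vecTail, Complex.ext_iff]⟩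
  · exact ⟨0, 1, by norm_num [W₁, Matrix.vecHead, Matrix.vecTail, Complex.ext_iff]⟩

lemma inSU21_w2 : InSU21 W₂ := by
  constructor
  · ext i j
    fin_cases i <;> fin_cases j <;>
      simp [W₂, formJ, Matrix.mul_apply, Fin.sum_univ_succ,
        Complex.ext_iff, Matrix.vecHead, Matrix.vecTail] <;> ring_nf <;> simp
  · simp [W₂, Matrix.det_fin_three, Complex.ext_iff,
      Matrix.vecHead, Matrix.vecTail] <;> ring_nf <;> simp

lemma gauss_w2 : GaussianEntries W₂ := by
  intro i j
  fin_cases i <;> fin_cases j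
  · exact ⟨1, 0, by norm_num [W₂, Matrix.vecHead, Matrix.vecTail, Complex.ext_iff]⟩
  · exact ⟨1, -1, by norm_num [W₂, Matrix.vecHead, Matrix.vecTail, Complex.ext_iff]⟩
  · exact ⟨-1, 1, by norm_num [W₂, Matrix.vecHead, Matrix.vecTail, Complex.ext_iff]⟩
  · exact ⟨-1, -1, by norm_num [W₂, Matrix.vecHead, Matrix.vecTail, Complex.ext_iff]⟩
  · exact ⟨-1, 0, by norm_num [W₂, Matrix.vecHead, Matrix.vecTail, Complex.ext_iff]⟩
  · exact ⟨1, -1, by norm_num [W₂, Matrix.vecHead, Matrix.vecTail, Complex.ext_iff]⟩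
  · exact ⟨-1, 1, by norm_num [W₂, Matrix.vecHead, Matrix.vecTail, Complex.ext_iff]⟩
  · exact ⟨1, 1, by norm_num [W₂, Matrix.vecHead, Matrix.vecTail, Complex.ext_iff]⟩
  · exact ⟨-1, -2, by norm_num [W₂, Matrix.vecHead, Matrix.vecTail, Complex.ext_iff]⟩

lemma inSU21_w3 : InSU21 W₃ := by
  constructor
  · ext i j
    fin_cases i <;> fin_cases j <;>
      simp [W₃, formJ, Matrix.mul_apply, Fin.sum_univ_succ,
        Complex.ext_iff, Matrix.vecHead, Matrix.vecTail] <;> ring_nf <;> simp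
  · simp [W₃, Matrix.det_fin_three, Complex.ext_iff,
      Matrix.vecHead, Matrix.vecTail] <;> ring_nf <;> simp

lemma gauss_w3 : GaussianEntries W₃ := by
  intro i j
  fin_cases i <;> fin_cases j
  · exact ⟨0, 1, by norm_num [W₃, Matrix.vecHead, Matrix.vecTail, Complex.ext_iff]⟩
  · exact ⟨1, 1, by norm_num [W₃, Matrix.vecHead, Matrix.vecTail, Complex.ext_iff]⟩
  · exact ⟨0, -1, by norm_num [W₃, Matrix.vecHead, Matrix.vecTail, Complex.ext_iff]⟩
  · exact ⟨1, -1, by norm_num [W₃, Matrix.vecHead, Matrix.vecTail, Complex.ext_iff]⟩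
  · exact ⟨-1, -2, by norm_num [W₃, Matrix.vecHead, Matrix.vecTail, Complex.ext_iff]⟩
  · exact ⟨0, 2, by norm_num [W₃, Matrix.vecHead, Matrix.vecTail, Complex.ext_iff]⟩
  · exact ⟨-1, -1, by norm_num [W₃, Matrix.vecHead, Matrix.vecTail, Complex.ext_iff]⟩
  · exact ⟨-3, 1, by norm_num [W₃, Matrix.vecHead, Matrix.vecTail, Complex.ext_iff]⟩
  · exact ⟨3, 2, by norm_num [W₃, Matrix.vecHead, Matrix.vecTail, Complex.ext_iff]⟩

lemma inSU21_w4 : InSU21 W₄ := by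
  constructor
  · ext i j
    fin_cases i <;> fin_cases j <;>
      simp [W₄, formJ, Matrix.mul_apply, Fin.sum_univ_succ,
        Complex.ext_iff, Matrix.vecHead, Matrix.vecTail] <;> ring_nf <;> simp
  · simp [W₄, Matrix.det_fin_three, Complex.ext_iff,
      Matrix.vecHead, Matrix.vecTail] <;> ring_nf <;> simp

lemma gauss_w4 : GaussianEntries W₄ := by
  intro i j
  fin_cases i <;> fin_cases j
  · exact ⟨0, -1, by norm_num [W₄, Matrix.vecHead, Matrix.vecTail, Complex.ext_iff]⟩
  · exact ⟨0, 0, by norm_num [W₄, Matrix.vecHead, Matrix.vecTail, Complex.ext_iff]⟩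
  · exact ⟨0, 0, by norm_num [W₄, Matrix.vecHead, Matrix.vecTail, Complex.ext_iff]⟩
  · exact ⟨-1, 1, by norm_num [W₄, Matrix.vecHead, Matrix.vecTail, Complex.ext_iff]⟩
  · exact ⟨-1, 0, by norm_num [W₄, Matrix.vecHead, Matrix.vecTail, Complex.ext_iff]⟩
  · exact ⟨0, 0, by norm_num [W₄, Matrix.vecHead, Matrix.vecTail, Complex.ext_iff]⟩
  · exact ⟨-1, 1, by norm_num [W₄, Matrix.vecHead, Matrix.vecTail, Complex.ext_iff]⟩
  · exact ⟨-1, 1, by norm_num [W₄, Matrix.vecHead, Matrix.vecTail, Complex.ext_iff]⟩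
  · exact ⟨0, -1, by norm_num [W₄, Matrix.vecHead, Matrix.vecTail, Complex.ext_iff]⟩

/-- The Whitehead link holonomy generators lie in `SU(2,1)` and have entries in
the Gaussian integers `ℤ[i]`. -/
theorem whitehead_generators_in_SU21 :
    (InSU21 W₁ ∧ GaussianEntries W₁) ∧ (InSU21 W₂ ∧ GaussianEntries W₂) ∧
    (InSU21 W₃ ∧ GaussianEntries W₃) ∧ (InSU21 W₄ ∧ GaussianEntries W₄) := by
  exact ⟨⟨inSU21_w1, gauss_w1⟩, ⟨inSU21_w2, gauss_w2⟩,
    ⟨inSU21_w3, gauss_w3⟩, ⟨inSU21_w4, gauss_w4⟩⟩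

end
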